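/- Let μ be a finite Borel measure on ℝ^d with closed support K_μ, let Λ ⊂ ℝ^d be countable, let φ : K_μ → ℝ^d be Borel measurable, and let ν = φ_*μ be the pushforward measure. Then E(Λ, φ) = {x ↦ e^{2πi λ·φ(x)} : λ ∈ Λ} is a frame for L²(μ) if and only if φ is μ-essentially injective and ν is a frame-spectral measure with frame spectrum Λ (i.e. E(Λ) = {y ↦ e^{2πi λ·y} : λ ∈ Λ} is a frame for L²(ν)). -/

import Mathlib

open MeasureTheory Filter Set
open scoped Real ENNReal Topology

noncomputable section

/-- `e2pi t = e^{2π i t}`. -/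
def e2pi (t : ℝ) : ℂ := Complex.exp (2 * Real.pi * Complex.I * t)

/-- The Euclidean dot product on `Fin d → ℝ`. -/
def dotp {d : ℕ} (a b : Fin d → ℝ) : ℝ := ∑ i, a i * b i

/-- `φ` is `μ`-essentially injective. -/
def EssInj {α β : Type*} [MeasurableSpace α] [MeasurableSpace β]
    (μ : Measure α) (φ : α → β) : Prop :=
  ∀ f : α → ℂ, MemLp f 2 μ →
    ∃ h : β → ℂ, MemLp h 2 (Measure.map φ μ) ∧ f =ᵐ[μ] fun x => h (φ x)

/-- The family `E(Λ, φ) = {x ↦ e^{2π i λ·φ(x)} : λ ∈ Λ}` is a frame for `L²(μ)`: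
there are `0 < A ≤ B < ∞` with `A‖f‖² ≤ Σ_{λ∈Λ} |⟨f, e_λ⟩|² ≤ B‖f‖²` for all `f ∈ L²(μ)`. -/
def FrameExp {α : Type*} [MeasurableSpace α] {d : ℕ}
    (μ : Measure α) (Λ : Set (Fin d → ℝ)) (φ : α → Fin d → ℝ) : Prop :=
  ∃ A B : ℝ, 0 < A ∧ A ≤ B ∧ ∀ f : α → ℂ, MemLp f 2 μ →
    (A * ∫ x, ‖f x‖ ^ 2 ∂μ) ≤
      (∑' lam : Λ, ‖∫ x, f x * (starRingEnd ℂ) (e2pi (dotp (lam : Fin d → ℝ) (φ x))) ∂μ‖ ^ 2) ∧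
    (∑' lam : Λ, ‖∫ x, f x * (starRingEnd ℂ) (e2pi (dotp (lam : Fin d → ℝ) (φ x))) ∂μ‖ ^ 2) ≤
      B * ∫ x, ‖f x‖ ^ 2 ∂μ

/-- `ν` is a frame-spectral measure with frame spectrum `Λ`: the exponentials `E(Λ)` form a
frame for `L²(ν)`. -/
def IsFrameSpectralMeasure {d : ℕ} (ν : Measure (Fin d → ℝ)) (Λ : Set (Fin d → ℝ)) : Prop :=
  FrameExp ν Λ id

namespace Statement4Aux

lemma norm_e2pi (t : ℝ) : ‖e2pi t‖ = 1 := by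
  have h : (2 * (Real.pi:ℂ) * Complex.I * t) = ((2 * Real.pi * t : ℝ) : ℂ) * Complex.I := by
    push_cast; ring
  rw [e2pi, h, Complex.norm_exp_ofReal_mul_I]

lemma continuous_e2pi : Continuous e2pi := by
  unfold e2pi; fun_prop

lemma continuous_dotp {d : ℕ} (a : Fin d → ℝ) : Continuous fun y : Fin d → ℝ => dotp a y := by
  unfold dotp; fun_prop

lemma continuous_ee {d : ℕ} (lam : Fin d → ℝ) :
    Continuous fun y : Fin d → ℝ => e2pi (dotp lam y) :=
  continuous_e2pi.comp (continuous_dotp lam)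

lemma continuous_eeconj {d : ℕ} (lam : Fin d → ℝ) :
    Continuous fun y : Fin d → ℝ => (starRingEnd ℂ) (e2pi (dotp lam y)) :=
  Complex.continuous_conj.comp (continuous_ee lam)

lemma memLp_ee {d : ℕ} (ν : Measure (Fin d → ℝ)) [IsFiniteMeasure ν] (lam : Fin d → ℝ) :
    MemLp (fun y => e2pi (dotp lam y)) 2 ν :=
  MemLp.of_bound (continuous_ee lam).measurable.aestronglyMeasurable 1 <|
    Eventually.of_forall fun y => by rw [norm_e2pi]

lemma transport_int {d : ℕ} {μ : Measure (Fin d → ℝ)} {φ : (Fin d → ℝ) → (Fin d → ℝ)}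
    (hφ : Measurable φ) {h : (Fin d → ℝ) → ℂ} (hh : AEStronglyMeasurable h (Measure.map φ μ))
    (lam : Fin d → ℝ) :
    ∫ x, h (φ x) * (starRingEnd ℂ) (e2pi (dotp lam (φ x))) ∂μ
      = ∫ y, h y * (starRingEnd ℂ) (e2pi (dotp lam y)) ∂(Measure.map φ μ) :=
  (integral_map hφ.aemeasurable
    (hh.mul (continuous_eeconj lam).measurable.aestronglyMeasurable)).symm

lemma transport_norm {d : ℕ} {μ : Measure (Fin d → ℝ)} {φ : (Fin d → ℝ) → (Fin d → ℝ)}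
    (hφ : Measurable φ) {h : (Fin d → ℝ) → ℂ} (hh : AEStronglyMeasurable h (Measure.map φ μ)) :
    ∫ x, ‖h (φ x)‖ ^ 2 ∂μ = ∫ y, ‖h y‖ ^ 2 ∂(Measure.map φ μ) :=
  (integral_map hφ.aemeasurable ((continuous_pow 2).comp_aestronglyMeasurable hh.norm)).symm

end Statement4Aux


open Statement4Aux

/-- `E(Λ, φ)` is a frame for `L²(μ)` iff `φ` is `μ`-essentially injective
and `ν = φ⋆μ` is a frame-spectral measure with frame spectrum `Λ`. -/
theorem statement4 {d : ℕ} (μ : Measure (Fin d → ℝ)) [IsFiniteMeasure μ]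
    (Λ : Set (Fin d → ℝ)) (hΛ : Λ.Countable)
    (φ : (Fin d → ℝ) → (Fin d → ℝ)) (hφ : Measurable φ) :
    FrameExp μ Λ φ ↔ (EssInj μ φ ∧ IsFrameSpectralMeasure (Measure.map φ μ) Λ) := by
  haveI : Fact ((1:ℝ≥0∞) ≤ 2) := ⟨one_le_two⟩
  have mp : MeasurePreserving φ μ (Measure.map φ μ) := ⟨hφ, rfl⟩
  haveI : IsFiniteMeasure (Measure.map φ μ) :=
    ⟨by rw [Measure.map_apply hφ MeasurableSet.univ]; exact measure_lt_top μ _⟩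
  constructor
  · rintro ⟨A, B, hA, hAB, hframe⟩
    constructor
    · -- essential injectivity
      intro f hf
      set ν := Measure.map φ μ with hνdef
      let C : Lp ℂ 2 ν →ₗᵢ[ℂ] Lp ℂ 2 μ := Lp.compMeasurePreservingₗᵢ ℂ φ mp
      let V : Submodule ℂ (Lp ℂ 2 μ) := LinearMap.range C.toLinearMap
      have hVc : IsClosed (V : Set (Lp ℂ 2 μ)) := by
        have h1 : IsClosed (Set.range C) := C.isometry.isClosedEmbedding.isClosed_range
        simpa [V, LinearMap.coe_range] using h1
      haveI : CompleteSpace V := hVc.completeSpace_coe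
      obtain ⟨g, hg, r, hr, hsum⟩ := V.exists_add_mem_mem_orthogonal (hf.toLp f)
      have hrmem : MemLp (⇑r) 2 μ := Lp.memLp r
      -- each frame coefficient of r vanishes
      have hzero : ∀ lam : Λ,
          ∫ x, r x * (starRingEnd ℂ) (e2pi (dotp (lam : Fin d → ℝ) (φ x))) ∂μ = 0 := by
        intro lam
        have hmem : MemLp (fun y => e2pi (dotp (lam : Fin d → ℝ) y)) 2 ν := memLp_ee ν _
        set eL : Lp ℂ 2 ν := hmem.toLp _ with heL
        have hCV : C eL ∈ V := ⟨eL, rfl⟩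
        have hinner : (inner ℂ (C eL) r : ℂ) = 0 :=
          (Submodule.mem_orthogonal V r).mp hr _ hCV
        rw [MeasureTheory.L2.inner_def] at hinner
        have hcf : (⇑(C eL) : (Fin d → ℝ) → ℂ)
            =ᵐ[μ] fun x => e2pi (dotp (lam : Fin d → ℝ) (φ x)) := by
          have h1 : (⇑(C eL) : (Fin d → ℝ) → ℂ) =ᵐ[μ] (⇑eL) ∘ φ :=
            Lp.coeFn_compMeasurePreserving eL mp
          have h2 : (⇑eL) ∘ φ =ᵐ[μ] (fun y => e2pi (dotp (lam : Fin d → ℝ) y)) ∘ φ :=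
            ae_eq_comp hφ.aemeasurable (hmem.coeFn_toLp)
          exact h1.trans h2
        have : ∫ x, r x * (starRingEnd ℂ) (e2pi (dotp (lam : Fin d → ℝ) (φ x))) ∂μ
            = ∫ x, (inner ℂ ((C eL) x) (r x) : ℂ) ∂μ := by
          refine integral_congr_ae (hcf.mono fun x hx => ?_)
          simp only [RCLike.inner_apply, hx]
        rw [this, hinner]
      -- lower frame bound forces r = 0 a.e.
      have hterm : ∀ lam : Λ,
          ‖∫ x, r x * (starRingEnd ℂ) (e2pi (dotp (lam : Fin d → ℝ) (φ x))) ∂μ‖ ^ 2 = (0:ℝ) :=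
        fun lam => by rw [hzero lam, norm_zero]; exact zero_pow two_ne_zero
      have hsum0 : (∑' lam : Λ,
          ‖∫ x, r x * (starRingEnd ℂ) (e2pi (dotp (lam : Fin d → ℝ) (φ x))) ∂μ‖ ^ 2) = 0 :=
        (tsum_congr hterm).trans tsum_zero
      obtain ⟨hlow, -⟩ := hframe _ hrmem
      rw [hsum0] at hlow
      have hI0 : ∫ x, ‖r x‖ ^ 2 ∂μ = 0 := by
        have h1 : (0:ℝ) ≤ ∫ x, ‖r x‖ ^ 2 ∂μ := integral_nonneg fun x => sq_nonneg _
        nlinarith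
      have hint : Integrable (fun x => ‖r x‖ ^ 2) μ := by
        have h2 := hrmem.norm_rpow (by norm_num) (by norm_num)
        rw [memLp_one_iff_integrable] at h2
        have h3 : (2:ℝ≥0∞).toReal = ((2:ℕ):ℝ) := by norm_num
        simpa [h3, Real.rpow_natCast] using h2
      have hr0 : (⇑r : (Fin d → ℝ) → ℂ) =ᵐ[μ] 0 := by
        have := (integral_eq_zero_iff_of_nonneg (fun x => sq_nonneg _) hint).mp hI0
        filter_upwards [this] with x hx
        have : ‖r x‖ = 0 := by
          have := hx
          simp only [Pi.zero_apply] at this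
          nlinarith [norm_nonneg (r x)]
        simpa using norm_eq_zero.mp this
      -- assemble
      obtain ⟨h', hCh'⟩ := hg
      refine ⟨⇑h', Lp.memLp h', ?_⟩
      have e1 : f =ᵐ[μ] ⇑(g + r) := by rw [← hsum]; exact hf.coeFn_toLp.symm
      have e2 : (⇑(g + r) : (Fin d → ℝ) → ℂ) =ᵐ[μ] ⇑g + ⇑r := Lp.coeFn_add g r
      have e3 : (⇑g : (Fin d → ℝ) → ℂ) =ᵐ[μ] (⇑h') ∘ φ := by
        rw [← hCh']; exact Lp.coeFn_compMeasurePreserving h' mp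
      filter_upwards [e1, e2, e3, hr0] with x h1 h2 h3 h4
      rw [h1, h2, Pi.add_apply, h3, h4, Pi.zero_apply, add_zero]
      rfl
    · -- frame spectral
      refine ⟨A, B, hA, hAB, fun h hh => ?_⟩
      have hfc : MemLp (fun x => h (φ x)) 2 μ := hh.comp_measurePreserving mp
      obtain ⟨h1, h2⟩ := hframe _ hfc
      have eint : ∀ lam : Λ,
          ∫ x, h (φ x) * (starRingEnd ℂ) (e2pi (dotp (lam : Fin d → ℝ) (φ x))) ∂μ
            = ∫ y, h y * (starRingEnd ℂ) (e2pi (dotp (lam : Fin d → ℝ) (id y)))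
                ∂(Measure.map φ μ) := by
        intro lam
        simpa only [id_eq] using transport_int hφ hh.1 (lam : Fin d → ℝ)
      have enorm : ∫ x, ‖h (φ x)‖ ^ 2 ∂μ = ∫ y, ‖h y‖ ^ 2 ∂(Measure.map φ μ) :=
        transport_norm hφ hh.1
      have et : (∑' lam : Λ,
            ‖∫ x, h (φ x) * (starRingEnd ℂ) (e2pi (dotp (lam : Fin d → ℝ) (φ x))) ∂μ‖ ^ 2)
          = ∑' lam : Λ, ‖∫ y, h y * (starRingEnd ℂ) (e2pi (dotp (lam : Fin d → ℝ) (id y)))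
              ∂(Measure.map φ μ)‖ ^ 2 :=
        tsum_congr fun lam => by rw [eint lam]
      rw [enorm, et] at h1 h2
      exact ⟨h1, h2⟩
  · rintro ⟨hEI, A, B, hA, hAB, hframe⟩
    refine ⟨A, B, hA, hAB, fun f hf => ?_⟩
    obtain ⟨h, hh, hfe⟩ := hEI f hf
    obtain ⟨h1, h2⟩ := hframe h hh
    have eint : ∀ lam : Λ,
        ∫ x, f x * (starRingEnd ℂ) (e2pi (dotp (lam : Fin d → ℝ) (φ x))) ∂μ
          = ∫ y, h y * (starRingEnd ℂ) (e2pi (dotp (lam : Fin d → ℝ) (id y)))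
              ∂(Measure.map φ μ) := by
      intro lam
      have e0 : ∫ x, f x * (starRingEnd ℂ) (e2pi (dotp (lam : Fin d → ℝ) (φ x))) ∂μ
          = ∫ x, h (φ x) * (starRingEnd ℂ) (e2pi (dotp (lam : Fin d → ℝ) (φ x))) ∂μ :=
        integral_congr_ae (hfe.mono fun x hx => by simp only [hx])
      rw [e0]
      simpa only [id_eq] using transport_int hφ hh.1 (lam : Fin d → ℝ)
    have enorm : ∫ x, ‖f x‖ ^ 2 ∂μ = ∫ y, ‖h y‖ ^ 2 ∂(Measure.map φ μ) := by
      have e0 : ∫ x, ‖f x‖ ^ 2 ∂μ = ∫ x, ‖h (φ x)‖ ^ 2 ∂μ :=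
        integral_congr_ae (hfe.mono fun x hx => by simp only [hx])
      rw [e0]; exact transport_norm hφ hh.1
    have et : (∑' lam : Λ,
          ‖∫ x, f x * (starRingEnd ℂ) (e2pi (dotp (lam : Fin d → ℝ) (φ x))) ∂μ‖ ^ 2)
        = ∑' lam : Λ, ‖∫ y, h y * (starRingEnd ℂ) (e2pi (dotp (lam : Fin d → ℝ) (id y)))
            ∂(Measure.map φ μ)‖ ^ 2 :=
      tsum_congr fun lam => by rw [eint lam]
    rw [enorm, et]
    exact ⟨h1, h2⟩
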